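/- Let K ∈ ℝ, N > 1 and δ > 0. There exist λ₁ > 0 and c > 0 such that for every λ ∈ (0, λ₁] the following holds: if f : [0,1] → ℝ is continuous on [0,1], twice continuously differentiable on (0,1), nonnegative, satisfies f(0) + f(1) ≥ 1, and satisfies the differential inequality f''(s) + ((K−δ)λ²/N) f(s) ≥ 0 for every s ∈ (0,1), then f(1/2) ≤ τ_{K,N}^{(1/2)}(λ) (f(0) + f(1)) − c λ². -/

import Mathlib

open Set

set_option maxHeartbeats 1000000


/-- Distortion coefficient `σ_Λ^{(t)}(θ)`. -/
noncomputable def sigmaCoeff (Λ t θ : ℝ) : ℝ :=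
  if Λ * θ ^ 2 = 0 then t
  else if 0 < Λ * θ ^ 2 then
    Real.sin (t * (θ * Real.sqrt Λ)) / Real.sin (θ * Real.sqrt Λ)
  else
    Real.sinh (t * (θ * Real.sqrt (-Λ))) / Real.sinh (θ * Real.sqrt (-Λ))

/-- Distortion coefficient `τ_{K,N}^{(t)}(θ) = t^{1/N} (σ_{K/(N-1)}^{(t)}(θ))^{1-1/N}`. -/
noncomputable def tauCoeff (K N t θ : ℝ) : ℝ :=
  t ^ (1 / N) * (sigmaCoeff (K / (N - 1)) t θ) ^ (1 - 1 / N)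



lemma my_cosh_quad {z : ℝ} (h0 : 0 ≤ z) (h1 : z ≤ 1) :
    |Real.cosh z - (1 + z ^ 2 / 2)| ≤ z ^ 3 := by
  have hz : |z| ≤ 1 := by rwa [abs_of_nonneg h0]
  have e1 := Real.exp_bound hz (n := 3) (by norm_num)
  have hz' : |(-z)| ≤ 1 := by rwa [abs_neg]
  have e2 := Real.exp_bound hz' (n := 3) (by norm_num)
  simp only [Finset.sum_range_succ, Finset.sum_range_zero, Nat.factorial] at e1 e2
  rw [abs_neg, abs_of_nonneg h0] at e2
  rw [abs_of_nonneg h0] at e1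
  rw [Real.cosh_eq, abs_le]
  rw [abs_le] at e1 e2
  norm_num at e1 e2 ⊢
  constructor <;> nlinarith [pow_nonneg h0 3, e1.1, e1.2, e2.1, e2.2]

lemma my_inv_cos {y : ℝ} (h0 : 0 ≤ y) (h1 : y ≤ 1 / 2) :
    0 < Real.cos (y / 2) ∧
      1 / Real.cos (y / 2) ≤ 1 + y ^ 2 / 8 + 2 * y ^ 3 ∧
      1 + y ^ 2 / 8 - 2 * y ^ 3 ≤ 1 / Real.cos (y / 2) := by
  have hb := Real.cos_bound (x := y / 2) (by rw [abs_of_nonneg (by linarith)]; linarith)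
  rw [abs_of_nonneg (by linarith : (0:ℝ) ≤ y / 2), abs_le] at hb
  have hy2 : y ^ 2 ≤ 1 / 4 := by nlinarith
  have hy3 : y ^ 3 ≤ y ^ 2 / 2 := by nlinarith [sq_nonneg y]
  have hy4 : y ^ 4 ≤ y ^ 3 / 2 := by nlinarith [pow_nonneg h0 3]
  have hy3n : 0 ≤ y ^ 3 := pow_nonneg h0 3
  have hy4n : 0 ≤ y ^ 4 := pow_nonneg h0 4
  have hlo : 1 - y ^ 2 / 8 - y ^ 4 * (5 / 1536) ≤ Real.cos (y / 2) := by
    have := hb.1; nlinarith [this]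
  have hhi : Real.cos (y / 2) ≤ 1 - y ^ 2 / 8 + y ^ 4 * (5 / 1536) := by
    have := hb.2; nlinarith [this]
  have hcpos : (0 : ℝ) < Real.cos (y / 2) := by nlinarith
  refine ⟨hcpos, ?_, ?_⟩
  · rw [div_le_iff₀ hcpos]
    have key : (0:ℝ) ≤ (1 + y ^ 2 / 8 + 2 * y ^ 3) *
        (Real.cos (y / 2) - (1 - y ^ 2 / 8 - y ^ 4 * (5 / 1536))) := by
      apply mul_nonneg (by nlinarith) (by linarith)
    nlinarith [key]
  · rw [le_div_iff₀ hcpos]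
    have key : (0:ℝ) ≤ (1 + y ^ 2 / 8 - 2 * y ^ 3) *
        ((1 - y ^ 2 / 8 + y ^ 4 * (5 / 1536)) - Real.cos (y / 2)) := by
      apply mul_nonneg (by nlinarith) (by linarith)
    nlinarith [key]

lemma my_inv_cosh {y : ℝ} (h0 : 0 ≤ y) (h1 : y ≤ 1 / 2) :
    1 / Real.cosh (y / 2) ≤ 1 - y ^ 2 / 8 + 2 * y ^ 3 ∧
      1 - y ^ 2 / 8 - 2 * y ^ 3 ≤ 1 / Real.cosh (y / 2) := by
  have hb := my_cosh_quad (z := y / 2) (by linarith) (by linarith)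
  rw [abs_le] at hb
  have hy2 : y ^ 2 ≤ 1 / 4 := by nlinarith
  have hy3 : y ^ 3 ≤ y ^ 2 / 2 := by nlinarith [sq_nonneg y]
  have hy3n : 0 ≤ y ^ 3 := pow_nonneg h0 3
  have hlo : 1 + y ^ 2 / 8 - y ^ 3 / 8 ≤ Real.cosh (y / 2) := by
    have := hb.1; nlinarith [this]
  have hhi : Real.cosh (y / 2) ≤ 1 + y ^ 2 / 8 + y ^ 3 / 8 := by
    have := hb.2; nlinarith [this]
  have hcpos : (0 : ℝ) < Real.cosh (y / 2) := Real.cosh_pos _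
  constructor
  · rw [div_le_iff₀ hcpos]
    have key : (0:ℝ) ≤ (1 - y ^ 2 / 8 + 2 * y ^ 3) *
        (Real.cosh (y / 2) - (1 + y ^ 2 / 8 - y ^ 3 / 8)) := by
      apply mul_nonneg (by nlinarith) (by linarith)
    nlinarith [key]
  · rw [le_div_iff₀ hcpos]
    have key : (0:ℝ) ≤ (1 - y ^ 2 / 8 - 2 * y ^ 3) *
        ((1 + y ^ 2 / 8 + y ^ 3 / 8) - Real.cosh (y / 2)) := by
      apply mul_nonneg (by nlinarith) (by linarith)
    nlinarith [key]

lemma my_bern {p t : ℝ} (hp0 : 0 < p) (hp1 : p < 1) (ht : |t| ≤ 1 / 2) :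
    1 + p * t - t ^ 2 ≤ (1 + t) ^ p := by
  rw [abs_le] at ht
  have h1t : (0 : ℝ) < 1 + t := by linarith [ht.1]
  have hB : (1 + t) ^ (1 - p) ≤ 1 + (1 - p) * t :=
    rpow_one_add_le_one_add_mul_self (by linarith [ht.1]) (by linarith) (by linarith)
  have hpos : (0 : ℝ) < (1 + t) ^ (1 - p) := Real.rpow_pos_of_pos h1t _
  have hC : (0 : ℝ) < 1 + (1 - p) * t := by nlinarith [ht.1, ht.2]
  have hA : (1 + t) ^ p = (1 + t) / (1 + t) ^ (1 - p) := by
    rw [eq_div_iff hpos.ne', ← Real.rpow_add h1t]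
    norm_num
  have hstep1 : (1 + t) / (1 + (1 - p) * t) ≤ (1 + t) ^ p := by
    rw [hA]
    gcongr
  refine le_trans ?_ hstep1
  rw [le_div_iff₀ hC]
  nlinarith [mul_nonneg (mul_nonneg (sub_nonneg.2 hp1.le) (sq_nonneg t)) (by linarith [ht.1] : (0:ℝ) ≤ 1/2 + t),
    mul_nonneg (sq_nonneg (p - 1/2)) (sq_nonneg t),
    mul_nonneg hp0.le (sq_nonneg t)]

lemma my_qc (f f' f'' φ φ' φ'' : ℝ → ℝ)
    (hf : ContinuousOn f (Set.Icc 0 1))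
    (hf' : ∀ s ∈ Set.Ioo (0:ℝ) 1, HasDerivAt f (f' s) s)
    (hf'' : ∀ s ∈ Set.Ioo (0:ℝ) 1, HasDerivAt f' (f'' s) s)
    (hφ' : ∀ s, HasDerivAt φ (φ' s) s)
    (hφ'' : ∀ s, HasDerivAt φ' (φ'' s) s)
    (hφpos : ∀ s ∈ Set.Icc (0:ℝ) 1, 0 < φ s)
    (hODE : ∀ s ∈ Set.Ioo (0:ℝ) 1, 0 ≤ φ s * f'' s - f s * φ'' s) :
    f (1/2) / φ (1/2) ≤ max (f 0 / φ 0) (f 1 / φ 1) := by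
  set w : ℝ → ℝ := fun s => φ s * f' s - f s * φ' s with hw
  have hwd : ∀ s ∈ Set.Ioo (0:ℝ) 1, HasDerivAt w (φ s * f'' s - f s * φ'' s) s := by
    intro s hs
    have h1 := (hφ' s).mul (hf'' s hs)
    have h2 := (hf' s hs).mul (hφ'' s)
    have h3 := h1.sub h2
    refine h3.congr_deriv ?_
    ring
  have hwmono : MonotoneOn w (Set.Ioo 0 1) := by
    apply monotoneOn_of_deriv_nonneg (convex_Ioo 0 1)
    · exact fun s hs => ((hwd s hs).continuousAt).continuousWithinAt
    · rw [interior_Ioo]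
      exact fun s hs => (hwd s hs).differentiableAt.differentiableWithinAt
    · rw [interior_Ioo]
      intro s hs
      rw [(hwd s hs).deriv]
      exact hODE s hs
  set h : ℝ → ℝ := fun s => f s / φ s with hh
  have hhalf : (1/2 : ℝ) ∈ Set.Ioo (0:ℝ) 1 := by norm_num
  have hφcont : Continuous φ := by
    have : Differentiable ℝ φ := fun s => (hφ' s).differentiableAt
    exact this.continuous
  have hhd : ∀ s ∈ Set.Ioo (0:ℝ) 1, HasDerivAt h (w s / (φ s) ^ 2) s := by
    intro s hs
    have hφne : φ s ≠ 0 := (hφpos s (Ioo_subset_Icc_self hs)).ne'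
    have := (hf' s hs).div (hφ' s) hφne
    refine this.congr_deriv ?_
    rw [hw]
    ring
  rcases le_total (w (1/2)) 0 with hwle | hwge
  · have hanti : AntitoneOn h (Set.Icc 0 (1/2)) := by
      apply antitoneOn_of_deriv_nonpos (convex_Icc _ _)
      · apply ContinuousOn.div (hf.mono (by intro x hx; exact ⟨hx.1, by linarith [hx.2]⟩))
          (hφcont.continuousOn)
        intro x hx
        exact (hφpos x ⟨hx.1, by linarith [hx.2]⟩).ne'
      · rw [interior_Icc]
        intro s hs
        exact (hhd s ⟨hs.1, by linarith [hs.2]⟩).differentiableAt.differentiableWithinAt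
      · rw [interior_Icc]
        intro s hs
        have hs' : s ∈ Set.Ioo (0:ℝ) 1 := ⟨hs.1, by linarith [hs.2]⟩
        rw [(hhd s hs').deriv]
        apply div_nonpos_of_nonpos_of_nonneg
        · exact le_trans (hwmono hs' hhalf (le_of_lt hs.2)) hwle
        · positivity
      
    have h0mem : (0:ℝ) ∈ Set.Icc (0:ℝ) (1/2) := by norm_num
    have hmmem : (1/2:ℝ) ∈ Set.Icc (0:ℝ) (1/2) := by norm_num
    have := hanti h0mem hmmem (by norm_num)
    exact le_max_of_le_left this
  · have hmono : MonotoneOn h (Set.Icc (1/2) 1) := by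
      apply monotoneOn_of_deriv_nonneg (convex_Icc _ _)
      · apply ContinuousOn.div (hf.mono (by intro x hx; exact ⟨by linarith [hx.1], hx.2⟩))
          (hφcont.continuousOn)
        intro x hx
        exact (hφpos x ⟨by linarith [hx.1], hx.2⟩).ne'
      · rw [interior_Icc]
        intro s hs
        exact (hhd s ⟨by linarith [hs.1], hs.2⟩).differentiableAt.differentiableWithinAt
      · rw [interior_Icc]
        intro s hs
        have hs' : s ∈ Set.Ioo (0:ℝ) 1 := ⟨by linarith [hs.1], hs.2⟩
        rw [(hhd s hs').deriv]
        apply div_nonneg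
        · exact le_trans hwge (hwmono hhalf hs' (le_of_lt hs.1))
        · positivity
    have h1mem : (1:ℝ) ∈ Set.Icc (1/2:ℝ) 1 := by norm_num
    have hmmem : (1/2:ℝ) ∈ Set.Icc (1/2:ℝ) 1 := by norm_num
    have := hmono hmmem h1mem (by norm_num)
    exact le_max_of_le_right this

lemma my_mid (a : ℝ) (f f' f'' φ φ' φ'' : ℝ → ℝ)
    (hf : ContinuousOn f (Set.Icc 0 1))
    (hf' : ∀ s ∈ Set.Ioo (0:ℝ) 1, HasDerivAt f (f' s) s)
    (hf'' : ∀ s ∈ Set.Ioo (0:ℝ) 1, HasDerivAt f' (f'' s) s)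
    (hfpos : ∀ s ∈ Set.Icc (0:ℝ) 1, 0 ≤ f s)
    (hODE : ∀ s ∈ Set.Ioo (0:ℝ) 1, 0 ≤ f'' s + a * f s)
    (hφ' : ∀ s, HasDerivAt φ (φ' s) s)
    (hφ'' : ∀ s, HasDerivAt φ' (φ'' s) s)
    (hφpos : ∀ s ∈ Set.Icc (0:ℝ) 1, 0 < φ s)
    (hφODE : ∀ s ∈ Set.Ioo (0:ℝ) 1, φ'' s + a * φ s ≤ 0)
    (hφsym : φ 1 = φ 0) :
    2 * f (1/2) / φ (1/2) ≤ (f 0 + f 1) / φ 0 := by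
  have hmaps : MapsTo (fun s : ℝ => 1 - s) (Set.Icc 0 1) (Set.Icc 0 1) := by
    intro x hx
    exact ⟨by simp; linarith [hx.2], by simp; linarith [hx.1]⟩
  have hFc : ContinuousOn (fun s => f s + f (1 - s)) (Set.Icc 0 1) := by
    apply hf.add
    exact hf.comp ((continuous_const.sub continuous_id).continuousOn) hmaps
  have hmem : ∀ s ∈ Set.Ioo (0:ℝ) 1, (1 - s) ∈ Set.Ioo (0:ℝ) 1 := by
    intro s hs
    exact ⟨by linarith [hs.2], by linarith [hs.1]⟩
  have hinner : ∀ s : ℝ, HasDerivAt (fun x : ℝ => 1 - x) (-1) s := by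
    intro s
    simpa using (hasDerivAt_id s).const_sub 1
  have hF' : ∀ s ∈ Set.Ioo (0:ℝ) 1,
      HasDerivAt (fun s => f s + f (1 - s)) (f' s - f' (1 - s)) s := by
    intro s hs
    have h1 := (hf' (1 - s) (hmem s hs)).comp s (hinner s)
    have h2 := (hf' s hs).add h1
    refine h2.congr_deriv ?_
    ring
  have hF'' : ∀ s ∈ Set.Ioo (0:ℝ) 1,
      HasDerivAt (fun s => f' s - f' (1 - s)) (f'' s + f'' (1 - s)) s := by
    intro s hs
    have h1 := (hf'' (1 - s) (hmem s hs)).comp s (hinner s)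
    have h2 := (hf'' s hs).sub h1
    refine h2.congr_deriv ?_
    ring
  have key := my_qc (fun s => f s + f (1 - s)) (fun s => f' s - f' (1 - s))
    (fun s => f'' s + f'' (1 - s)) φ φ' φ'' hFc hF' hF'' hφ' hφ'' hφpos ?_
  · have e1 : (1:ℝ) - 1/2 = 1/2 := by norm_num
    have e2 : (1:ℝ) - 0 = 1 := by norm_num
    have e3 : (1:ℝ) - 1 = 0 := by norm_num
    simp only [e1, e2, e3] at key
    have : max ((f 0 + f 1) / φ 0) ((f 1 + f 0) / φ 1) = (f 0 + f 1) / φ 0 := by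
      rw [hφsym, add_comm (f 1) (f 0), max_self]
    rw [this] at key
    calc 2 * f (1/2) / φ (1/2) = (f (1/2) + f (1/2)) / φ (1/2) := by ring_nf
      _ ≤ (f 0 + f 1) / φ 0 := key
  · intro s hs
    have h1 := hODE s hs
    have h2 := hODE (1 - s) (hmem s hs)
    have h3 := hφODE s hs
    have h4 := hφpos s (Ioo_subset_Icc_self hs)
    have h5 := hfpos s (Ioo_subset_Icc_self hs)
    have h6 := hfpos (1 - s) (Ioo_subset_Icc_self (hmem s hs))
    nlinarith [mul_nonneg h4.le h1, mul_nonneg h4.le h2,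
      mul_nonneg (add_nonneg h5 h6) (neg_nonneg.2 h3)]

lemma my_ode_bound (Λ lam : ℝ) (hlam : 0 < lam) (hy : lam * (|Λ| + 1) ≤ 1/2)
    (f f' f'' : ℝ → ℝ)
    (hf : ContinuousOn f (Set.Icc 0 1))
    (hf' : ∀ s ∈ Set.Ioo (0:ℝ) 1, HasDerivAt f (f' s) s)
    (hf'' : ∀ s ∈ Set.Ioo (0:ℝ) 1, HasDerivAt f' (f'' s) s)
    (hfpos : ∀ s ∈ Set.Icc (0:ℝ) 1, 0 ≤ f s)
    (hODE : ∀ s ∈ Set.Ioo (0:ℝ) 1, 0 ≤ f'' s + (Λ * lam ^ 2) * f s) :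
    2 * f (1/2) ≤ (f 0 + f 1) * (1 + Λ * lam ^ 2 / 8 + 2 * (|Λ| + 1) ^ 2 * lam ^ 3) := by
  have hSnn : 0 ≤ f 0 + f 1 :=
    add_nonneg (hfpos 0 (by norm_num)) (hfpos 1 (by norm_num))
  have hMnn : (0:ℝ) ≤ (|Λ| + 1) ^ 2 := by positivity
  have hlam2 : (0:ℝ) < lam ^ 2 := by positivity
  have hlam3 : (0:ℝ) ≤ lam ^ 3 := by positivity
  rcases lt_trichotomy Λ 0 with hΛ | hΛ | hΛ
  · -- cosh case
    have habs : |Λ| = -Λ := abs_of_neg hΛ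
    have hanegg : (0:ℝ) < -(Λ * lam ^ 2) := by nlinarith
    obtain ⟨y, hydef⟩ : ∃ y, y = Real.sqrt (-(Λ * lam ^ 2)) := ⟨_, rfl⟩
    have hynn : 0 ≤ y := hydef ▸ Real.sqrt_nonneg _
    have hy2 : y ^ 2 = -(Λ * lam ^ 2) := hydef ▸ Real.sq_sqrt hanegg.le
    have hyle' : y ≤ lam * (|Λ| + 1) := by
      rw [habs]
      have h1 : -(Λ * lam ^ 2) ≤ (lam * (-Λ + 1)) ^ 2 := by
        nlinarith [mul_pos hlam2 (neg_pos.2 hΛ), mul_nonneg hlam2.le (sq_nonneg Λ)]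
      calc y = Real.sqrt (-(Λ * lam ^ 2)) := hydef
        _ ≤ Real.sqrt ((lam * (-Λ + 1)) ^ 2) := Real.sqrt_le_sqrt h1
        _ = lam * (-Λ + 1) := Real.sqrt_sq (by nlinarith)
    have hyle : y ≤ 1/2 := le_trans hyle' hy
    have hy3 : y ^ 3 ≤ (|Λ| + 1) ^ 2 * lam ^ 3 := by
      rw [habs]
      have h2 : y ^ 3 = -(Λ * lam ^ 2) * y := by rw [← hy2]; ring
      rw [h2]
      have h3 : -(Λ * lam ^ 2) * y ≤ -(Λ * lam ^ 2) * (lam * (-Λ + 1)) := by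
        apply mul_le_mul_of_nonneg_left _ hanegg.le
        rw [habs] at hyle'; exact hyle'
      refine le_trans h3 ?_
      nlinarith [mul_nonneg (mul_nonneg hlam3 (neg_pos.2 hΛ).le) (neg_pos.2 hΛ).le,
        mul_nonneg hlam3 (neg_pos.2 hΛ).le]
    have hud : ∀ s : ℝ, HasDerivAt (fun s : ℝ => y * (s - 1/2)) y s := by
      intro s
      exact (((hasDerivAt_id s).sub_const (1/2)).const_mul y).congr_deriv (mul_one y)
    have key := my_mid (Λ * lam ^ 2) f f' f''
      (fun s => Real.cosh (y * (s - 1/2)))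
      (fun s => Real.sinh (y * (s - 1/2)) * y)
      (fun s => Real.cosh (y * (s - 1/2)) * y * y)
      hf hf' hf'' hfpos hODE
      (fun s => (Real.hasDerivAt_cosh _).comp s (hud s))
      (fun s => ((Real.hasDerivAt_sinh _).comp s (hud s)).mul_const y)
      (fun s _ => Real.cosh_pos _)
      (by
        intro s _
        have : Real.cosh (y * (s - 1/2)) * y * y + Λ * lam ^ 2 * Real.cosh (y * (s - 1/2))
            = Real.cosh (y * (s - 1/2)) * (y ^ 2 - -(Λ * lam ^ 2)) := by ring
        rw [this, hy2]
        simp)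
      (by
        rw [show y * ((0:ℝ) - 1/2) = -(y * (1 - 1/2)) by ring, Real.cosh_neg])
    rw [show y * ((1:ℝ)/2 - 1/2) = 0 by ring, Real.cosh_zero, div_one,
      show y * ((0:ℝ) - 1/2) = -(y/2) by ring, Real.cosh_neg] at key
    have hch := my_inv_cosh hynn hyle
    calc 2 * f (1/2) ≤ (f 0 + f 1) / Real.cosh (y/2) := key
      _ = (f 0 + f 1) * (1 / Real.cosh (y/2)) := by ring
      _ ≤ (f 0 + f 1) * (1 - y ^ 2 / 8 + 2 * y ^ 3) :=
          mul_le_mul_of_nonneg_left hch.1 hSnn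
      _ ≤ (f 0 + f 1) * (1 + Λ * lam ^ 2 / 8 + 2 * (|Λ| + 1) ^ 2 * lam ^ 3) := by
          apply mul_le_mul_of_nonneg_left _ hSnn
          rw [hy2]
          nlinarith [hy3]
  · -- zero case
    have key := my_mid (Λ * lam ^ 2) f f' f'' (fun _ => 1) (fun _ => 0) (fun _ => 0)
      hf hf' hf'' hfpos hODE (fun s => hasDerivAt_const s 1) (fun s => hasDerivAt_const s 0)
      (fun s _ => one_pos) (by intro s _; simp [hΛ]) rfl
    simp only [div_one] at key
    have hz : Λ * lam ^ 2 / 8 = 0 := by rw [hΛ]; ring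
    rw [hz]
    nlinarith [key, mul_nonneg (mul_nonneg hSnn hMnn) hlam3]
  · -- cos case
    have habs : |Λ| = Λ := abs_of_pos hΛ
    have hapos : (0:ℝ) < Λ * lam ^ 2 := by positivity
    obtain ⟨y, hydef⟩ : ∃ y, y = Real.sqrt (Λ * lam ^ 2) := ⟨_, rfl⟩
    have hynn : 0 ≤ y := hydef ▸ Real.sqrt_nonneg _
    have hy2 : y ^ 2 = Λ * lam ^ 2 := hydef ▸ Real.sq_sqrt hapos.le
    have hyle' : y ≤ lam * (|Λ| + 1) := by
      rw [habs]
      have h1 : Λ * lam ^ 2 ≤ (lam * (Λ + 1)) ^ 2 := by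
        nlinarith [mul_pos hlam2 hΛ, mul_nonneg hlam2.le (sq_nonneg Λ)]
      calc y = Real.sqrt (Λ * lam ^ 2) := hydef
        _ ≤ Real.sqrt ((lam * (Λ + 1)) ^ 2) := Real.sqrt_le_sqrt h1
        _ = lam * (Λ + 1) := Real.sqrt_sq (by positivity)
    have hyle : y ≤ 1/2 := le_trans hyle' hy
    have hy3 : y ^ 3 ≤ (|Λ| + 1) ^ 2 * lam ^ 3 := by
      rw [habs]
      have h2 : y ^ 3 = (Λ * lam ^ 2) * y := by rw [← hy2]; ring
      rw [h2]
      have h3 : (Λ * lam ^ 2) * y ≤ (Λ * lam ^ 2) * (lam * (Λ + 1)) := by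
        apply mul_le_mul_of_nonneg_left _ hapos.le
        rw [habs] at hyle'; exact hyle'
      refine le_trans h3 ?_
      nlinarith [mul_nonneg (mul_nonneg hlam3 hΛ.le) hΛ.le, mul_nonneg hlam3 hΛ.le]
    have hud : ∀ s : ℝ, HasDerivAt (fun s : ℝ => y * (s - 1/2)) y s := by
      intro s
      exact (((hasDerivAt_id s).sub_const (1/2)).const_mul y).congr_deriv (mul_one y)
    have hφpos : ∀ s ∈ Set.Icc (0:ℝ) 1, 0 < Real.cos (y * (s - 1/2)) := by
      intro s hs
      have hb : |y * (s - 1/2)| ≤ 1/4 := by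
        rw [abs_mul, abs_of_nonneg hynn]
        have h1 : |s - 1/2| ≤ 1/2 := by
          rw [abs_le]; exact ⟨by linarith [hs.1], by linarith [hs.2]⟩
        nlinarith [abs_nonneg (s - 1/2)]
      rw [abs_le] at hb
      have hpi := Real.pi_gt_three
      apply Real.cos_pos_of_mem_Ioo
      constructor
      · linarith [hb.1]
      · linarith [hb.2]
    have key := my_mid (Λ * lam ^ 2) f f' f''
      (fun s => Real.cos (y * (s - 1/2)))
      (fun s => -Real.sin (y * (s - 1/2)) * y)
      (fun s => -Real.cos (y * (s - 1/2)) * y * y)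
      hf hf' hf'' hfpos hODE
      (fun s => by
        have h1 := (Real.hasDerivAt_cos (y * (s - 1/2))).comp s (hud s)
        exact h1)
      (fun s => by
        have h1 := ((Real.hasDerivAt_sin (y * (s - 1/2))).comp s (hud s)).neg.mul_const y
        refine h1.congr_deriv ?_
        ring)
      hφpos
      (by
        intro s _
        have : -Real.cos (y * (s - 1/2)) * y * y + Λ * lam ^ 2 * Real.cos (y * (s - 1/2))
            = Real.cos (y * (s - 1/2)) * (Λ * lam ^ 2 - y ^ 2) := by ring
        rw [this, hy2]
        simp)
      (by
        rw [show y * ((0:ℝ) - 1/2) = -(y * (1 - 1/2)) by ring, Real.cos_neg])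
    rw [show y * ((1:ℝ)/2 - 1/2) = 0 by ring, Real.cos_zero, div_one,
      show y * ((0:ℝ) - 1/2) = -(y/2) by ring, Real.cos_neg] at key
    have hch := my_inv_cos hynn hyle
    calc 2 * f (1/2) ≤ (f 0 + f 1) / Real.cos (y/2) := key
      _ = (f 0 + f 1) * (1 / Real.cos (y/2)) := by ring
      _ ≤ (f 0 + f 1) * (1 + y ^ 2 / 8 + 2 * y ^ 3) :=
          mul_le_mul_of_nonneg_left hch.2.1 hSnn
      _ ≤ (f 0 + f 1) * (1 + Λ * lam ^ 2 / 8 + 2 * (|Λ| + 1) ^ 2 * lam ^ 3) := by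
          apply mul_le_mul_of_nonneg_left _ hSnn
          rw [hy2]
          nlinarith [hy3]

lemma my_rpow_half (N t : ℝ) (hN : 1 < N) (ht : 0 < 1 + t) :
    ((1:ℝ)/2) ^ ((1:ℝ) / N) * ((1:ℝ)/2 * (1 + t)) ^ (1 - 1/N)
      = 1/2 * (1 + t) ^ (1 - 1/N) := by
  rw [Real.mul_rpow (by norm_num) ht.le, ← mul_assoc, ← Real.rpow_add (by norm_num : (0:ℝ) < 1/2)]
  norm_num

lemma my_tau_neg (K N lam : ℝ) (hK : K < 0) (hN : 1 < N) (hlam : 0 < lam)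
    (hy : lam * (|K / (N - 1)| + 1) ≤ 1/2) :
    1/2 + K * lam ^ 2 / (16 * N) - 2 * (|K / (N - 1)| + 1) ^ 2 * lam ^ 3
      ≤ tauCoeff K N (1/2) lam := by
  have hN0 : (0:ℝ) < N := by linarith
  have hN1 : (0:ℝ) < N - 1 := by linarith
  have hp0 : (0:ℝ) < 1 - 1/N := by
    have : 1/N < 1 := by rw [div_lt_one hN0]; exact hN
    linarith
  have hp1 : 1 - 1/N < 1 := by
    have : 0 < 1/N := by positivity
    linarith
  have hlam2 : (0:ℝ) < lam ^ 2 := by positivity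
  have hlam3 : (0:ℝ) ≤ lam ^ 3 := by positivity
  have hMnn : (0:ℝ) ≤ (|K / (N - 1)| + 1) ^ 2 := by positivity
    -- sinh case
  have hΛ : K / (N - 1) < 0 := div_neg_of_neg_of_pos hK hN1
  have habs : |K / (N - 1)| = -(K / (N - 1)) := abs_of_neg hΛ
  have hcond1 : ¬ (K / (N - 1) * lam ^ 2 = 0) := by
    apply ne_of_lt; nlinarith
  have hcond2 : ¬ (0 < K / (N - 1) * lam ^ 2) := by
    push_neg; nlinarith
  obtain ⟨y, hydef⟩ : ∃ y, y = lam * Real.sqrt (-(K / (N - 1))) := ⟨_, rfl⟩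
  have hynn : 0 ≤ y := by
    rw [hydef]; positivity
  have hy2 : y ^ 2 = -(K / (N - 1)) * lam ^ 2 := by
    rw [hydef, mul_pow, Real.sq_sqrt (by linarith : (0:ℝ) ≤ -(K / (N - 1)))]
    ring
  have hsqle : Real.sqrt (-(K / (N - 1))) ≤ |K / (N - 1)| + 1 := by
    rw [habs]
    nlinarith [Real.sq_sqrt (by linarith : (0:ℝ) ≤ -(K / (N - 1))),
      Real.sqrt_nonneg (-(K / (N - 1)))]
  have hyle : y ≤ 1/2 := by
    rw [hydef]
    refine le_trans ?_ hy
    exact mul_le_mul_of_nonneg_left hsqle hlam.le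
  have hy3 : y ^ 3 ≤ (|K / (N - 1)| + 1) ^ 2 * lam ^ 3 := by
    have h2 : y ^ 3 = y ^ 2 * y := by ring
    rw [h2, hy2, hydef]
    have : -(K / (N - 1)) * lam ^ 2 * (lam * Real.sqrt (-(K / (N - 1))))
        ≤ -(K / (N - 1)) * lam ^ 2 * (lam * (|K / (N - 1)| + 1)) := by
      apply mul_le_mul_of_nonneg_left _ (by nlinarith)
      exact mul_le_mul_of_nonneg_left hsqle hlam.le
    refine le_trans this ?_
    rw [habs]
    nlinarith [mul_nonneg (mul_nonneg hlam3 (neg_pos.2 hΛ).le) (neg_pos.2 hΛ).le,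
      mul_nonneg hlam3 (neg_pos.2 hΛ).le]
  have hσ : sigmaCoeff (K / (N - 1)) (1/2) lam = 1/2 * (1 / Real.cosh (y / 2)) := by
    rw [sigmaCoeff, if_neg hcond1, if_neg hcond2]
    have e1 : (1:ℝ)/2 * (lam * Real.sqrt (-(K / (N - 1)))) = y / 2 := by
      rw [hydef]; ring
    have e2 : lam * Real.sqrt (-(K / (N - 1))) = y := hydef.symm
    rw [e1, e2]
    have hsh : Real.sinh y = 2 * Real.sinh (y/2) * Real.cosh (y/2) := by
      have := Real.sinh_two_mul (y/2)
      rw [show 2 * (y/2) = y by ring] at this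
      exact this
    have hy0 : 0 < y := by
      rw [hydef]
      apply mul_pos hlam
      apply Real.sqrt_pos.2
      linarith
    have hshpos : 0 < Real.sinh (y/2) := by
      rw [Real.sinh_pos_iff]; linarith
    have hchpos : 0 < Real.cosh (y/2) := Real.cosh_pos _
    rw [hsh]
    field_simp
  -- bounds on t
  have hch := my_inv_cosh hynn hyle
  obtain ⟨t, htdef⟩ : ∃ t, t = 1 / Real.cosh (y / 2) - 1 := ⟨_, rfl⟩
  have ht1 : t ≤ -(y^2)/8 + 2*y^3 := by rw [htdef]; linarith [hch.1]
  have ht2 : -(y^2)/8 - 2*y^3 ≤ t := by rw [htdef]; linarith [hch.2]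
  have hyy2 : y^2 ≤ 1/4 := by nlinarith
  have hyy3 : y^3 ≤ 1/8 := by nlinarith
  have htab : |t| ≤ 1/2 := by
    rw [abs_le]
    constructor <;> nlinarith
  have h1t : 0 < 1 + t := by
    rw [htdef]
    have : 0 < 1 / Real.cosh (y/2) := by positivity
    linarith
  have hτ : tauCoeff K N (1/2) lam = 1/2 * (1 + t) ^ (1 - 1/N) := by
    rw [tauCoeff, hσ, show (1:ℝ)/2 * (1 / Real.cosh (y/2)) = 1/2 * (1 + t) by rw [htdef]; ring]
    exact my_rpow_half N t hN h1t
  rw [hτ]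
  have hbern := my_bern hp0 hp1 htab
  have hid : (1 - 1/N) * (K / (N - 1)) = K / N := by
    field_simp
  have hpt : (1 - 1/N) * t ≥ K/N * lam^2 / 8 - 2*y^3 := by
    have h5 : (1 - 1/N) * t ≥ (1 - 1/N) * (-(y^2)/8 - 2*y^3) :=
      mul_le_mul_of_nonneg_left ht2 hp0.le
    have h6 : (1 - 1/N) * (-(y^2)/8) = K/N * lam^2/8 := by
      rw [hy2, ← hid]; ring
    have hy3n : (0:ℝ) ≤ y^3 := by positivity
    linarith [h5, h6, mul_nonneg (by positivity : (0:ℝ) ≤ 1/N) hy3n]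
  have ht2b : t^2 ≤ y^3 := by
    have hy3n : (0:ℝ) ≤ y^3 := by positivity
    have habs2 : |t| ≤ y^2/8 + 2*y^3 := by
      rw [abs_le]; constructor <;> nlinarith
    have := sq_abs t
    nlinarith [abs_nonneg t, sq_nonneg (y^2/8 + 2*y^3)]
  have hbig : 1 + (1 - 1/N) * t - t^2 ≥ 1 + K/N * lam^2/8 - 3*y^3 := by
    linarith [hpt, ht2b]
  have hfin : (1:ℝ)/2 * (1 + (1 - 1/N) * t - t^2)
      ≥ 1/2 + K * lam^2 / (16*N) - 2 * (|K / (N - 1)| + 1) ^ 2 * lam ^ 3 := by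
    rw [show K * lam^2 / (16*N) = (K/N * lam^2/8)/2 by ring]
    linarith [hbig, hy3, mul_nonneg hMnn hlam3]
  linarith [hbern, hfin]

lemma my_tau_zero (K N lam : ℝ) (hK : K = 0) (hN : 1 < N) (hlam : 0 < lam)
    (hy : lam * (|K / (N - 1)| + 1) ≤ 1/2) :
    1/2 + K * lam ^ 2 / (16 * N) - 2 * (|K / (N - 1)| + 1) ^ 2 * lam ^ 3
      ≤ tauCoeff K N (1/2) lam := by
  have hN0 : (0:ℝ) < N := by linarith
  have hN1 : (0:ℝ) < N - 1 := by linarith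
  have hp0 : (0:ℝ) < 1 - 1/N := by
    have : 1/N < 1 := by rw [div_lt_one hN0]; exact hN
    linarith
  have hp1 : 1 - 1/N < 1 := by
    have : 0 < 1/N := by positivity
    linarith
  have hlam2 : (0:ℝ) < lam ^ 2 := by positivity
  have hlam3 : (0:ℝ) ≤ lam ^ 3 := by positivity
  have hMnn : (0:ℝ) ≤ (|K / (N - 1)| + 1) ^ 2 := by positivity
    -- zero case
  have hcond1 : K / (N - 1) * lam ^ 2 = 0 := by rw [hK]; ring
  have hσ : sigmaCoeff (K / (N - 1)) (1/2) lam = 1/2 := by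
    rw [sigmaCoeff, if_pos hcond1]
  have hτ : tauCoeff K N (1/2) lam = 1/2 := by
    rw [tauCoeff, hσ, ← Real.rpow_add (by norm_num : (0:ℝ) < (1:ℝ)/2)]
    norm_num
  rw [hτ, hK]
  norm_num
  nlinarith [mul_nonneg hMnn hlam3]

lemma my_tau_pos (K N lam : ℝ) (hK : 0 < K) (hN : 1 < N) (hlam : 0 < lam)
    (hy : lam * (|K / (N - 1)| + 1) ≤ 1/2) :
    1/2 + K * lam ^ 2 / (16 * N) - 2 * (|K / (N - 1)| + 1) ^ 2 * lam ^ 3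
      ≤ tauCoeff K N (1/2) lam := by
  have hN0 : (0:ℝ) < N := by linarith
  have hN1 : (0:ℝ) < N - 1 := by linarith
  have hp0 : (0:ℝ) < 1 - 1/N := by
    have : 1/N < 1 := by rw [div_lt_one hN0]; exact hN
    linarith
  have hp1 : 1 - 1/N < 1 := by
    have : 0 < 1/N := by positivity
    linarith
  have hlam2 : (0:ℝ) < lam ^ 2 := by positivity
  have hlam3 : (0:ℝ) ≤ lam ^ 3 := by positivity
  have hMnn : (0:ℝ) ≤ (|K / (N - 1)| + 1) ^ 2 := by positivity
    -- sin case
  have hΛ : 0 < K / (N - 1) := div_pos hK hN1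
  have habs : |K / (N - 1)| = K / (N - 1) := abs_of_pos hΛ
  have hcond1 : ¬ (K / (N - 1) * lam ^ 2 = 0) := by
    apply ne_of_gt; positivity
  have hcond2 : (0 < K / (N - 1) * lam ^ 2) := by positivity
  obtain ⟨y, hydef⟩ : ∃ y, y = lam * Real.sqrt (K / (N - 1)) := ⟨_, rfl⟩
  have hynn : 0 ≤ y := by rw [hydef]; positivity
  have hy2 : y ^ 2 = (K / (N - 1)) * lam ^ 2 := by
    rw [hydef, mul_pow, Real.sq_sqrt hΛ.le]
    ring
  have hsqle : Real.sqrt (K / (N - 1)) ≤ |K / (N - 1)| + 1 := by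
    rw [habs]
    nlinarith [Real.sq_sqrt hΛ.le, Real.sqrt_nonneg (K / (N - 1))]
  have hyle : y ≤ 1/2 := by
    rw [hydef]
    refine le_trans ?_ hy
    exact mul_le_mul_of_nonneg_left hsqle hlam.le
  have hy3 : y ^ 3 ≤ (|K / (N - 1)| + 1) ^ 2 * lam ^ 3 := by
    have h2 : y ^ 3 = y ^ 2 * y := by ring
    rw [h2, hy2, hydef]
    have : (K / (N - 1)) * lam ^ 2 * (lam * Real.sqrt (K / (N - 1)))
        ≤ (K / (N - 1)) * lam ^ 2 * (lam * (|K / (N - 1)| + 1)) := by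
      apply mul_le_mul_of_nonneg_left _ (by positivity)
      exact mul_le_mul_of_nonneg_left hsqle hlam.le
    refine le_trans this ?_
    rw [habs]
    nlinarith [mul_nonneg (mul_nonneg hlam3 hΛ.le) hΛ.le, mul_nonneg hlam3 hΛ.le]
  have hy0 : 0 < y := by
    rw [hydef]
    exact mul_pos hlam (Real.sqrt_pos.2 hΛ)
  have hch := my_inv_cos hynn hyle
  have hσ : sigmaCoeff (K / (N - 1)) (1/2) lam = 1/2 * (1 / Real.cos (y / 2)) := by
    rw [sigmaCoeff, if_neg hcond1, if_pos hcond2]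
    have e1 : (1:ℝ)/2 * (lam * Real.sqrt (K / (N - 1))) = y / 2 := by
      rw [hydef]; ring
    have e2 : lam * Real.sqrt (K / (N - 1)) = y := hydef.symm
    rw [e1, e2]
    have hsh : Real.sin y = 2 * Real.sin (y/2) * Real.cos (y/2) := by
      have := Real.sin_two_mul (y/2)
      rw [show 2 * (y/2) = y by ring] at this
      exact this
    have hpi := Real.pi_gt_three
    have hshpos : 0 < Real.sin (y/2) :=
      Real.sin_pos_of_pos_of_lt_pi (by linarith) (by linarith)
    have hchpos : 0 < Real.cos (y/2) := hch.1
    rw [hsh]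
    field_simp
  obtain ⟨t, htdef⟩ : ∃ t, t = 1 / Real.cos (y / 2) - 1 := ⟨_, rfl⟩
  have ht1 : t ≤ y^2/8 + 2*y^3 := by rw [htdef]; linarith [hch.2.1]
  have ht2 : y^2/8 - 2*y^3 ≤ t := by rw [htdef]; linarith [hch.2.2]
  have hyy2 : y^2 ≤ 1/4 := by nlinarith
  have hyy3 : y^3 ≤ 1/8 := by nlinarith
  have htab : |t| ≤ 1/2 := by
    rw [abs_le]
    constructor <;> nlinarith
  have h1t : 0 < 1 + t := by
    rw [htdef]
    have : 0 < 1 / Real.cos (y/2) := one_div_pos.2 hch.1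
    linarith
  have hτ : tauCoeff K N (1/2) lam = 1/2 * (1 + t) ^ (1 - 1/N) := by
    rw [tauCoeff, hσ, show (1:ℝ)/2 * (1 / Real.cos (y/2)) = 1/2 * (1 + t) by rw [htdef]; ring]
    exact my_rpow_half N t hN h1t
  rw [hτ]
  have hbern := my_bern hp0 hp1 htab
  have hid : (1 - 1/N) * (K / (N - 1)) = K / N := by
    field_simp
  have hpt : (1 - 1/N) * t ≥ K/N * lam^2 / 8 - 2*y^3 := by
    have h5 : (1 - 1/N) * t ≥ (1 - 1/N) * (y^2/8 - 2*y^3) :=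
      mul_le_mul_of_nonneg_left ht2 hp0.le
    have h6 : (1 - 1/N) * (y^2/8) = K/N * lam^2/8 := by
      rw [hy2, ← hid]; ring
    have hy3n : (0:ℝ) ≤ y^3 := by positivity
    linarith [h5, h6, mul_nonneg (by positivity : (0:ℝ) ≤ 1/N) hy3n]
  have ht2b : t^2 ≤ y^3 := by
    have hy3n : (0:ℝ) ≤ y^3 := by positivity
    have habs2 : |t| ≤ y^2/8 + 2*y^3 := by
      rw [abs_le]; constructor <;> nlinarith
    have := sq_abs t
    nlinarith [abs_nonneg t, sq_nonneg (y^2/8 + 2*y^3)]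
  have hbig : 1 + (1 - 1/N) * t - t^2 ≥ 1 + K/N * lam^2/8 - 3*y^3 := by
    linarith [hpt, ht2b]
  have hfin : (1:ℝ)/2 * (1 + (1 - 1/N) * t - t^2)
      ≥ 1/2 + K * lam^2 / (16*N) - 2 * (|K / (N - 1)| + 1) ^ 2 * lam ^ 3 := by
    rw [show K * lam^2 / (16*N) = (K/N * lam^2/8)/2 by ring]
    linarith [hbig, hy3, mul_nonneg hMnn hlam3]
  linarith [hbern, hfin]

lemma my_tau_bound (K N lam : ℝ) (hN : 1 < N) (hlam : 0 < lam)
    (hy : lam * (|K / (N - 1)| + 1) ≤ 1/2) :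
    1/2 + K * lam ^ 2 / (16 * N) - 2 * (|K / (N - 1)| + 1) ^ 2 * lam ^ 3
      ≤ tauCoeff K N (1/2) lam := by
  rcases lt_trichotomy K 0 with hK | hK | hK
  · exact my_tau_neg K N lam hK hN hlam hy
  · exact my_tau_zero K N lam hK hN hlam hy
  · exact my_tau_pos K N lam hK hN hlam hy

/-- One-dimensional content of Proposition 3.2: there are `λ₁ > 0` and `c > 0`
such that, for `0 < λ ≤ λ₁`, any nonnegative `C²` solution of
`f'' + ((K-δ)λ²/N) f ≥ 0` with `f(0) + f(1) ≥ 1` satisfies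
`f(1/2) ≤ τ_{K,N}^{(1/2)}(λ)(f(0) + f(1)) - cλ²`. -/
theorem stmt_8 (K N δ : ℝ) (hN : 1 < N) (hδ : 0 < δ) :
    ∃ lam₁ > (0 : ℝ), ∃ c > (0 : ℝ), ∀ lam : ℝ, 0 < lam → lam ≤ lam₁ →
      ∀ f f' f'' : ℝ → ℝ,
        ContinuousOn f (Set.Icc 0 1) →
        (∀ s ∈ Set.Ioo (0 : ℝ) 1, HasDerivAt f (f' s) s) →
        (∀ s ∈ Set.Ioo (0 : ℝ) 1, HasDerivAt f' (f'' s) s) →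
        ContinuousOn f'' (Set.Ioo 0 1) →
        (∀ s ∈ Set.Icc (0 : ℝ) 1, 0 ≤ f s) →
        1 ≤ f 0 + f 1 →
        (∀ s ∈ Set.Ioo (0 : ℝ) 1, 0 ≤ f'' s + ((K - δ) * lam ^ 2 / N) * f s) →
        f (1 / 2) ≤ tauCoeff K N (1 / 2) lam * (f 0 + f 1) - c * lam ^ 2 := by
  have hN0 : (0:ℝ) < N := by linarith
  have hN1 : (0:ℝ) < N - 1 := by linarith
  have hMb : (0:ℝ) < (|(K - δ)/N| + 1)^2 := by positivity
  have hMt : (0:ℝ) < (|K/(N-1)| + 1)^2 := by positivity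
  refine ⟨min (δ/(64*N*((|K/(N-1)| + 1)^2 + (|(K - δ)/N| + 1)^2)))
      (min (1/(2*(|(K - δ)/N| + 1))) (1/(2*(|K/(N-1)| + 1)))), ?_, δ/N/32, ?_, ?_⟩
  · apply lt_min
    · positivity
    · apply lt_min <;> positivity
  · positivity
  intro lam hlam hlam1 f f' f'' hf hf' hf'' _hf''c hfpos hsum hODE
  have hlam2 : (0:ℝ) < lam ^ 2 := by positivity
  have hlam3 : (0:ℝ) ≤ lam ^ 3 := by positivity
  have hgap : lam ≤ δ/(64*N*((|K/(N-1)| + 1)^2 + (|(K - δ)/N| + 1)^2)) :=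
    le_trans hlam1 (min_le_left _ _)
  have hb2 : lam ≤ 1/(2*(|(K - δ)/N| + 1)) :=
    le_trans hlam1 (le_trans (min_le_right _ _) (min_le_left _ _))
  have ht2 : lam ≤ 1/(2*(|K/(N-1)| + 1)) :=
    le_trans hlam1 (le_trans (min_le_right _ _) (min_le_right _ _))
  have hyb : lam * (|(K - δ)/N| + 1) ≤ 1/2 := by
    rw [le_div_iff₀ (by positivity : (0:ℝ) < 2*(|(K - δ)/N| + 1))] at hb2
    linarith
  have hyt : lam * (|K/(N-1)| + 1) ≤ 1/2 := by
    rw [le_div_iff₀ (by positivity : (0:ℝ) < 2*(|K/(N-1)| + 1))] at ht2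
    linarith
  have hODE' : ∀ s ∈ Set.Ioo (0:ℝ) 1, 0 ≤ f'' s + ((K - δ)/N * lam ^ 2) * f s := by
    intro s hs
    have e : (K - δ)/N * lam^2 = (K - δ)*lam^2/N := by ring
    rw [e]
    exact hODE s hs
  have hB := my_ode_bound ((K - δ)/N) lam hlam hyb f f' f'' hf hf' hf'' hfpos hODE'
  have hτ := my_tau_bound K N lam hN hlam hyt
  have hSnn : (0:ℝ) ≤ f 0 + f 1 := by linarith
  have hτS : (1/2 + K * lam ^ 2 / (16 * N) - 2 * (|K/(N-1)| + 1) ^ 2 * lam ^ 3) * (f 0 + f 1)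
      ≤ tauCoeff K N (1/2) lam * (f 0 + f 1) :=
    mul_le_mul_of_nonneg_right hτ hSnn
  have hgap' : lam * (64*N*((|K/(N-1)| + 1)^2 + (|(K - δ)/N| + 1)^2)) ≤ δ := by
    rw [← le_div_iff₀ (by positivity)]
    exact hgap
  have hXq' : (2*(|K/(N-1)| + 1)^2 + (|(K - δ)/N| + 1)^2)*lam^3*(32*N) ≤ δ*lam^2 := by
    nlinarith [mul_le_mul_of_nonneg_right hgap' (sq_nonneg lam),
      mul_nonneg (mul_nonneg hN0.le hMb.le) hlam3]
  have h1 : (2*(|K/(N-1)| + 1)^2 + (|(K - δ)/N| + 1)^2)*lam^3 ≤ δ/N*lam^2/32 := by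
    rw [show δ/N*lam^2/32 = (δ*lam^2)/(32*N) by ring,
      le_div_iff₀ (by positivity : (0:ℝ) < 32*N)]
    linarith [hXq']
  have h2 : δ/N/32*lam^2 ≤ (δ/N)*lam^2/16 - (2*(|K/(N-1)| + 1)^2 + (|(K - δ)/N| + 1)^2)*lam^3 := by
    have e : δ/N/32*lam^2 = δ/N*lam^2/32 := by ring
    rw [e]
    linarith [h1]
  have h3 : (0:ℝ) ≤ (δ/N)*lam^2/16 - (2*(|K/(N-1)| + 1)^2 + (|(K - δ)/N| + 1)^2)*lam^3 :=
    le_trans (by positivity) h2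
  have hXS : δ/N/32*lam^2 ≤ (f 0 + f 1) *
      ((δ/N)*lam^2/16 - (2*(|K/(N-1)| + 1)^2 + (|(K - δ)/N| + 1)^2)*lam^3) := by
    have h4 : 1 * ((δ/N)*lam^2/16 - (2*(|K/(N-1)| + 1)^2 + (|(K - δ)/N| + 1)^2)*lam^3)
        ≤ (f 0 + f 1) * ((δ/N)*lam^2/16 - (2*(|K/(N-1)| + 1)^2 + (|(K - δ)/N| + 1)^2)*lam^3) :=
      mul_le_mul_of_nonneg_right hsum h3
    linarith [h2]
  have hEq : (1/2 + K * lam ^ 2 / (16 * N) - 2 * (|K/(N-1)| + 1) ^ 2 * lam ^ 3) * (f 0 + f 1)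
      - (f 0 + f 1) * (1 + (K - δ)/N * lam ^ 2 / 8 + 2 * (|(K - δ)/N| + 1) ^ 2 * lam ^ 3) / 2
      = (f 0 + f 1) *
        ((δ/N)*lam^2/16 - (2*(|K/(N-1)| + 1)^2 + (|(K - δ)/N| + 1)^2)*lam^3) := by
    field_simp
    ring
  linarith [hτS, hB, hXS, hEq]
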